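/- Let H be a digraph on a finite vertex set V with n = |V| vertices and let d ≥ 1 be an integer. Then there exists a set S ⊆ V such that every SCC of H ∖ E(S) has diameter at most d, and, letting 𝒞 denote the collection of vertex sets of the SCCs of H ∖ E(S), |S| ≤ (4·lg n / d) · Σ_{C ∈ 𝒞} |C|·(lg n − lg |C|). -/

import Mathlib

variable {V : Type*}

/-- Unweighted walk distance in the digraph with edge relation `E`:
the minimum number of edges of a walk from `u` to `v`, `∞` if none exists. -/
noncomputable def ddist (E : V → V → Prop) (u v : V) : ℕ∞ :=
  sInf { n : ℕ∞ | ∃ l : List V, l.Chain' E ∧ l.head? = some u ∧ l.getLast? = some v ∧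
    n = ((l.length - 1 : ℕ) : ℕ∞) }

/-- Weighted walk distance: the minimum total weight of a walk from `u` to `v`. -/
noncomputable def wdist (E : V → V → Prop) (w : V → V → ℕ) (u v : V) : ℕ∞ :=
  sInf { n : ℕ∞ | ∃ l : List V, l.Chain' E ∧ l.head? = some u ∧ l.getLast? = some v ∧
    n = ((((l.zip l.tail).map fun p => w p.1 p.2).sum : ℕ) : ℕ∞) }

/-- The digraph `H ∖ E(S)`: edges of `E` with neither endpoint in `S`. -/
def edgesAvoiding (E : V → V → Prop) (S : Set V) : V → V → Prop :=
  fun a b => E a b ∧ a ∉ S ∧ b ∉ S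

/-- The strongly connected component of `v`: vertices mutually reachable with `v`. -/
def scc (E : V → V → Prop) (v : V) : Set V :=
  {u | Relation.ReflTransGen E u v ∧ Relation.ReflTransGen E v u}

/-- `S` is a `q`-quality separator: every SCC of `H ∖ E(S)` has at most `|V| - q·|S|` vertices. -/
def QualSep [Fintype V] (E : V → V → Prop) (q : ℝ) (S : Set V) : Prop :=
  ∀ v : V, ((scc (edgesAvoiding E S) v).ncard : ℝ) ≤ (Fintype.card V : ℝ) - q * S.ncard

/-- Edge relation of the induced subdigraph on `C`. -/
def induced (E : V → V → Prop) (C : Set V) : V → V → Prop :=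
  fun a b => E a b ∧ a ∈ C ∧ b ∈ C

/-- The (finite) collection of vertex sets of the SCCs of the digraph. -/
noncomputable def sccs [Fintype V] (E : V → V → Prop) : Finset (Set V) :=
  letI := Classical.decEq (Set V)
  Finset.image (fun v => scc E v) Finset.univ

/-- walks of exactly k edges -/
def walkN (E : V → V → Prop) : ℕ → V → V → Prop
  | 0 => Eq
  | (k+1) => fun u v => ∃ w, E u w ∧ walkN E k w v

def ball (E : V → V → Prop) (u : V) (k : ℕ) : Set V := {v | ∃ j ≤ k, walkN E j u v}

lemma walkN_trans {E : V → V → Prop} : ∀ {j k : ℕ} {u w v : V},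
    walkN E j u w → walkN E k w v → walkN E (j + k) u v := by
  intro j
  induction j with
  | zero => intro k u w v h1 h2; cases h1; simpa using h2
  | succ j ih =>
    rintro k u w v ⟨x, hx, hw⟩ h2
    have hj : j + 1 + k = (j + k) + 1 := by omega
    rw [hj]
    exact ⟨x, hx, ih hw h2⟩

lemma walkN_snoc {E : V → V → Prop} : ∀ {k : ℕ} {u v : V},
    walkN E (k + 1) u v ↔ ∃ w, walkN E k u w ∧ E w v := by
  intro k
  induction k with
  | zero =>
    intro u v
    constructor
    · rintro ⟨w, hw, h⟩; cases h; exact ⟨u, rfl, hw⟩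
    · rintro ⟨w, h, hw⟩; cases h; exact ⟨v, hw, rfl⟩
  | succ k ih =>
    intro u v
    constructor
    · rintro ⟨x, hx, h⟩
      rcases ih.1 h with ⟨w, hw, hwv⟩
      exact ⟨w, ⟨x, hx, hw⟩, hwv⟩
    · rintro ⟨w, ⟨x, hx, hw⟩, hwv⟩
      exact ⟨x, hx, ih.2 ⟨w, hw, hwv⟩⟩

lemma walkN_flip {E : V → V → Prop} : ∀ {k : ℕ} {u v : V},
    walkN (fun a b => E b a) k u v ↔ walkN E k v u := by
  intro k
  induction k with
  | zero => intro u v; simp [walkN, eq_comm]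
  | succ k ih =>
    intro u v
    constructor
    · rintro ⟨w, hw, h⟩
      exact walkN_snoc.2 ⟨w, ih.1 h, hw⟩
    · intro h
      rcases walkN_snoc.1 h with ⟨w, hw, hwv⟩
      exact ⟨w, hwv, ih.2 hw⟩

lemma walkN_mono {E E' : V → V → Prop} (hEE : ∀ a b, E' a b → E a b) :
    ∀ {k : ℕ} {u v : V}, walkN E' k u v → walkN E k u v := by
  intro k
  induction k with
  | zero => intro u v h; exact h
  | succ k ih => rintro u v ⟨w, hw, h⟩; exact ⟨w, hEE _ _ hw, ih h⟩

lemma walkN_list {E : V → V → Prop} : ∀ {k : ℕ} {u v : V}, walkN E k u v →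
    ∃ l : List V, l.Chain' E ∧ l.head? = some u ∧ l.getLast? = some v ∧ l.length = k + 1 := by
  intro k
  induction k with
  | zero => intro u v h; cases h; exact ⟨[u], List.isChain_singleton u, by simp, by simp, by simp⟩
  | succ k ih =>
    rintro u v ⟨w, hw, h⟩
    rcases ih h with ⟨l, hc, hh, hl, hlen⟩
    refine ⟨u :: l, ?_, by simp, ?_, by simp [hlen]⟩
    · show List.IsChain E (u :: l); rw [List.isChain_cons]
      exact ⟨fun y hy => by rw [hh] at hy; cases hy; exact hw, hc⟩
    · cases l with
      | nil => simp at hlen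
      | cons b t => rw [← hl]; exact List.getLast?_cons_cons

lemma ddist_le_of_walkN {E : V → V → Prop} {k : ℕ} {u v : V} (h : walkN E k u v) :
    ddist E u v ≤ (k : ℕ∞) := by
  rcases walkN_list h with ⟨l, hc, hh, hl, hlen⟩
  exact sInf_le ⟨l, hc, hh, hl, by rw [hlen]; simp⟩

lemma walkN_le_of_ddist {E : V → V → Prop} {d : ℕ} {u v : V}
    (h : ¬ ddist E u v ≤ (d : ℕ∞)) : ∀ k ≤ d, ¬ walkN E k u v := by
  intro k hk hw
  exact h (le_trans (ddist_le_of_walkN hw) (by exact_mod_cast hk))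

/- scc basics -/
lemma mem_scc_self (E : V → V → Prop) (v : V) : v ∈ scc E v :=
  ⟨Relation.ReflTransGen.refl, Relation.ReflTransGen.refl⟩

lemma scc_eq_of_mem {E : V → V → Prop} {u v : V} (h : u ∈ scc E v) : scc E u = scc E v := by
  obtain ⟨huv, hvu⟩ := h
  ext x
  exact ⟨fun ⟨h1, h2⟩ => ⟨h1.trans huv, hvu.trans h2⟩,
    fun ⟨h1, h2⟩ => ⟨h1.trans hvu, huv.trans h2⟩⟩

lemma scc_mono {E E' : V → V → Prop} (hEE : ∀ a b, E' a b → E a b) (v : V) :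
    scc E' v ⊆ scc E v := fun _x ⟨h1, h2⟩ =>
  ⟨Relation.ReflTransGen.mono hEE _ _ h1, Relation.ReflTransGen.mono hEE _ _ h2⟩

lemma scc_flip (E : V → V → Prop) (v : V) : scc (fun a b => E b a) v = scc E v := by
  ext x
  constructor
  · rintro ⟨h1, h2⟩
    exact ⟨(Relation.reflTransGen_swap).2 h2, (Relation.reflTransGen_swap).2 h1⟩
  · rintro ⟨h1, h2⟩
    exact ⟨(Relation.reflTransGen_swap).1 h2, (Relation.reflTransGen_swap).1 h1⟩

/- edgesAvoiding basics -/
lemma edgesAvoiding_le {E : V → V → Prop} {S : Set V} :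
    ∀ a b, edgesAvoiding E S a b → E a b := fun _ _ h => h.1

lemma edgesAvoiding_empty (E : V → V → Prop) : edgesAvoiding E (∅ : Set V) = E := by
  funext a b
  simp [edgesAvoiding]

lemma edgesAvoiding_union (E : V → V → Prop) (L S : Set V) :
    edgesAvoiding E (L ∪ S) = edgesAvoiding (edgesAvoiding E L) S := by
  funext a b
  simp only [edgesAvoiding, Set.mem_union, eq_iff_iff]
  tauto

lemma edgesAvoiding_flip (E : V → V → Prop) (L : Set V) :
    edgesAvoiding (fun a b => E b a) L = fun a b => edgesAvoiding E L b a := by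
  funext a b
  simp only [edgesAvoiding, eq_iff_iff]
  tauto

lemma induced_flip (E : V → V → Prop) (C : Set V) :
    induced (fun a b => E b a) C = fun a b => induced E C b a := by
  funext a b
  simp only [induced, eq_iff_iff]
  tauto

/- ball basics -/
lemma ball_zero (E : V → V → Prop) (u : V) : ball E u 0 = {u} := by
  ext v
  simp only [ball, Set.mem_setOf_eq, Set.mem_singleton_iff]
  constructor
  · rintro ⟨j, hj, hw⟩
    interval_cases j
    exact hw.symm
  · rintro rfl
    exact ⟨0, le_rfl, rfl⟩

lemma ball_mono {E : V → V → Prop} {u : V} {k k' : ℕ} (h : k ≤ k') :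
    ball E u k ⊆ ball E u k' := fun _v ⟨j, hj, hw⟩ => ⟨j, hj.trans h, hw⟩

lemma mem_ball_self (E : V → V → Prop) (u : V) (k : ℕ) : u ∈ ball E u k :=
  ⟨0, Nat.zero_le _, rfl⟩

lemma ball_step {E : V → V → Prop} {u v w : V} {k : ℕ}
    (hv : v ∈ ball E u k) (hw : E v w) : w ∈ ball E u (k + 1) := by
  rcases hv with ⟨j, hj, hwalk⟩
  exact ⟨j + 1, by omega, walkN_snoc.2 ⟨v, hwalk, hw⟩⟩

lemma walkN_induced_mem {E : V → V → Prop} {C : Set V} {u v : V} {k : ℕ}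
    (hu : u ∈ C) (h : walkN (induced E C) k u v) : v ∈ C := by
  cases k with
  | zero => cases h; exact hu
  | succ k => rcases walkN_snoc.1 h with ⟨w, _, hwv⟩; exact hwv.2.2

lemma ball_induced_subset {E : V → V → Prop} {C : Set V} {u : V} {k : ℕ}
    (hu : u ∈ C) : ball (induced E C) u k ⊆ C := by
  rintro v ⟨j, _, hw⟩
  exact walkN_induced_mem hu hw

lemma ball_stab {E : V → V → Prop} {u : V} {j : ℕ}
    (h : ball E u (j + 1) = ball E u j) : ∀ k, j ≤ k → ball E u k = ball E u j := by
  intro k hk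
  induction k with
  | zero => simp [Nat.le_zero.1 hk]
  | succ k ih =>
    rcases Nat.lt_or_ge j (k+1) with hlt | hge
    · have hjk : j ≤ k := by omega
      have hik := ih hjk
      apply Set.Subset.antisymm _ (ball_mono hk)
      rintro v ⟨i, hi, hw⟩
      rcases Nat.lt_or_ge i (k+1) with hik' | hge'
      · have : v ∈ ball E u k := ⟨i, by omega, hw⟩
        rw [hik] at this
        exact this
      · have hieq : i = k + 1 := by omega
        subst hieq
        rcases walkN_snoc.1 hw with ⟨w, hww, hwv⟩
        have : w ∈ ball E u j := by rw [← hik]; exact ⟨k, le_rfl, hww⟩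
        have : v ∈ ball E u (j+1) := ball_step this hwv
        rw [h] at this
        exact this
    · have : j = k + 1 := by omega
      simp [this]

lemma reflTransGen_to_walkN {E : V → V → Prop} {u v : V}
    (h : Relation.ReflTransGen E u v) : ∃ k, walkN E k u v := by
  induction h with
  | refl => exact ⟨0, rfl⟩
  | tail _ hstep ih =>
    rcases ih with ⟨k, hk⟩
    exact ⟨k + 1, walkN_snoc.2 ⟨_, hk, hstep⟩⟩

/-- strong connectivity within the induced subgraph on an SCC -/
lemma reflTransGen_induced_scc {E : V → V → Prop} {v₀ u₁ u₂ : V}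
    (h1 : u₁ ∈ scc E v₀) (h2 : u₂ ∈ scc E v₀) :
    Relation.ReflTransGen (induced E (scc E v₀)) u₁ u₂ := by
  have key : ∀ y, Relation.ReflTransGen E u₁ y → Relation.ReflTransGen E y u₂ →
      Relation.ReflTransGen (induced E (scc E v₀)) u₁ y := by
    intro y hy hyu2
    induction hy with
    | refl => exact Relation.ReflTransGen.refl
    | @tail z y' hz hstep ih =>
      have hzu2 : Relation.ReflTransGen E z u₂ := Relation.ReflTransGen.head hstep hyu2
      have hz' := ih hzu2
      have hzC : z ∈ scc E v₀ :=
        ⟨hzu2.trans h2.1, h1.2.trans (Relation.ReflTransGen.mono (fun a b h => h.1) _ _ hz')⟩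
      have hy'C : y' ∈ scc E v₀ :=
        ⟨hyu2.trans h2.1, hzC.2.tail hstep⟩
      exact hz'.tail ⟨hstep, hzC, hy'C⟩
  have hu12 : Relation.ReflTransGen E u₁ u₂ := h1.1.trans h2.2
  exact key u₂ hu12 Relation.ReflTransGen.refl

/-- removing the layer `ball (i+1) \ ball i` traps the ball -/
lemma scc_subset_ball {E : V → V → Prop} {v₀ u : V} {i : ℕ}
    (hu : u ∈ scc E v₀) :
    ∀ w ∈ ball (induced E (scc E v₀)) u i,
      scc (edgesAvoiding E
        (ball (induced E (scc E v₀)) u (i+1) \ ball (induced E (scc E v₀)) u i)) w ⊆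
      ball (induced E (scc E v₀)) u i := by
  set C := scc E v₀ with hC
  set E₀ := induced E C with hE₀
  set L := ball E₀ u (i+1) \ ball E₀ u i with hL
  intro w hw y hy
  obtain ⟨hyw, hwy⟩ := hy
  have hwC : w ∈ C := ball_induced_subset hu hw
  -- aux: along the path w → y in E ∖ L, staying reachable-to-v₀ keeps us in the ball
  have key : ∀ y', Relation.ReflTransGen (edgesAvoiding E L) w y' →
      Relation.ReflTransGen E y' v₀ → y' ∈ ball E₀ u i := by
    intro y' hwy'
    induction hwy' with
    | refl => intro _; exact hw
    | @tail z y'' hz hstep ih =>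
      intro hyv₀
      have hzv₀ : Relation.ReflTransGen E z v₀ :=
        Relation.ReflTransGen.head hstep.1 hyv₀
      have hzB : z ∈ ball E₀ u i := ih hzv₀
      have hzC : z ∈ C := ball_induced_subset hu hzB
      have hy''C : y'' ∈ C := ⟨hyv₀, hzC.2.tail hstep.1⟩
      have hy''b : y'' ∈ ball E₀ u (i+1) := ball_step hzB ⟨hstep.1, hzC, hy''C⟩
      have : y'' ∉ L := hstep.2.2
      rw [hL] at this
      simp only [Set.mem_diff, not_and, not_not] at this
      exact this hy''b
  exact key y hwy ((Relation.ReflTransGen.mono edgesAvoiding_le _ _ hyw).trans hwC.1)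

lemma scc_of_removed {E : V → V → Prop} {L : Set V} {w : V} (hw : w ∈ L) :
    scc (edgesAvoiding E L) w = {w} := by
  apply Set.Subset.antisymm
  · rintro y ⟨hyw, -⟩
    rcases Relation.ReflTransGen.cases_tail hyw with h | ⟨z, _, hstep⟩
    · exact Set.mem_singleton_iff.2 h.symm
    · exact absurd hw hstep.2.2
  · rintro y rfl
    exact mem_scc_self _ _

lemma cut_lemma [Fintype V] {F : V → V → Prop} {v₀ u u' : V} {d r : ℕ} {c : ℝ}
    (hc : 0 ≤ c) (hr : 1 ≤ r) (hrd : 2 * r ≤ d)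
    (han : ((Fintype.card V : ℝ)) < (1 + c) ^ r)
    (hu : u ∈ scc F v₀) (hu' : u' ∈ scc F v₀)
    (hdd : ∀ k ≤ d, ¬ walkN (induced F (scc F v₀)) k u u')
    (hsmall : 2 * (ball (induced F (scc F v₀)) u r).ncard ≤ (scc F v₀).ncard) :
    ∃ L W : Set V, L.Nonempty ∧ L ⊆ scc F v₀ ∧ W ⊆ scc F v₀ ∧
      ((L.ncard : ℝ) ≤ c * W.ncard) ∧ 2 * W.ncard ≤ (scc F v₀).ncard ∧
      ∀ w ∈ W, scc (edgesAvoiding F L) w ⊆ W := by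
  classical
  set C := scc F v₀ with hC
  set E₀ := induced F C with hE₀
  -- u' is not in any small ball
  have hu'nb : ∀ k ≤ d, u' ∉ ball E₀ u k := by
    rintro k hk ⟨j, hj, hw⟩
    exact hdd j (hj.trans hk) hw
  -- layers are nonempty
  have hlayer : ∀ i, i + 1 ≤ r → (ball E₀ u (i+1) \ ball E₀ u i).Nonempty := by
    intro i hir
    rw [Set.nonempty_iff_ne_empty]
    intro hemp
    have heq : ball E₀ u (i+1) = ball E₀ u i :=
      Set.Subset.antisymm (fun x hx => by
        by_contra hxn
        exact Set.eq_empty_iff_forall_notMem.1 hemp x ⟨hx, hxn⟩) (ball_mono (by omega))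
    obtain ⟨k, hk⟩ := reflTransGen_to_walkN (reflTransGen_induced_scc hu hu')
    have hu'k : u' ∈ ball E₀ u (max k i) := ⟨k, le_max_left _ _, hk⟩
    rw [ball_stab heq _ (le_max_right _ _)] at hu'k
    exact hu'nb r (by omega) (ball_mono (by omega) hu'k)
  -- there is a small layer
  have hex : ∃ i, i + 1 ≤ r ∧
      (((ball E₀ u (i+1) \ ball E₀ u i).ncard : ℝ) ≤ c * (ball E₀ u i).ncard) := by
    by_contra hbig
    push_neg at hbig
    have grow : ∀ i, i ≤ r → (1+c)^i ≤ ((ball E₀ u i).ncard : ℝ) := by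
      intro i
      induction i with
      | zero => intro _; simp [ball_zero]
      | succ i ih =>
        intro hir
        have h1 := hbig i (by omega)
        have h2 : (ball E₀ u (i+1) \ ball E₀ u i).ncard + (ball E₀ u i).ncard
            = (ball E₀ u (i+1)).ncard :=
          Set.ncard_diff_add_ncard_of_subset (ball_mono (by omega)) (Set.toFinite _)
        have h3 : ((ball E₀ u (i+1)).ncard : ℝ)
            = ((ball E₀ u (i+1) \ ball E₀ u i).ncard : ℝ) + (ball E₀ u i).ncard := by
          exact_mod_cast (congrArg (fun x : ℕ => (x : ℝ)) h2).symm
        have h4 := ih (by omega)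
        have hb0 : (0:ℝ) ≤ ((ball E₀ u i).ncard : ℝ) := by positivity
        have : (1+c)^(i+1) = (1+c)^i * (1+c) := by ring
        rw [this, h3]
        nlinarith
    have h1 := grow r le_rfl
    have h2n : (ball E₀ u r).ncard ≤ Fintype.card V := by
      have := Set.ncard_le_ncard (Set.subset_univ (ball E₀ u r)) (Set.toFinite _)
      simpa [Set.ncard_univ, Nat.card_eq_fintype_card] using this
    have h2 : ((ball E₀ u r).ncard : ℝ) ≤ (Fintype.card V : ℝ) := by exact_mod_cast h2n
    linarith
  obtain ⟨i, hir, hsmalllayer⟩ := hex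
  refine ⟨ball E₀ u (i+1) \ ball E₀ u i, ball E₀ u i, hlayer i hir, ?_, ?_, hsmalllayer, ?_, ?_⟩
  · exact fun x hx => ball_induced_subset hu hx.1
  · exact ball_induced_subset hu
  · have : (ball E₀ u i).ncard ≤ (ball E₀ u r).ncard :=
      Set.ncard_le_ncard (ball_mono (by omega)) (Set.toFinite _)
    omega
  · exact scc_subset_ball hu

lemma one_le_logb_two {n : ℕ} (hn : 2 ≤ n) : 1 ≤ Real.logb 2 n := by
  have : Real.logb 2 2 ≤ Real.logb 2 n :=
    Real.logb_le_logb_of_le one_lt_two (by norm_num) (by exact_mod_cast hn)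
  rwa [Real.logb_self_eq_one one_lt_two] at this

lemma analytic_step {n d : ℕ} (hn : 2 ≤ n) (hd : 4 * (Real.logb 2 n)^2 < d) :
    ((n : ℝ)) < (1 + 4 * Real.logb 2 n / d) ^ (d / 2 : ℕ) := by
  set L := Real.logb 2 n with hLdef
  have hL1 : 1 ≤ L := one_le_logb_two hn
  have hL0 : 0 < L := by linarith
  have hd5 : 5 ≤ d := by
    have : (4 : ℝ) ≤ 4 * L ^ 2 := by nlinarith
    have : (4 : ℝ) < d := lt_of_le_of_lt this hd
    exact_mod_cast Nat.lt_iff_add_one_le.mp (by exact_mod_cast this)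
  have hd0 : (0 : ℝ) < d := by positivity
  set c : ℝ := 4 * L / d with hcdef
  have hc0 : 0 < c := by positivity
  have hc1 : c ≤ 1 := by
    rw [hcdef, div_le_one hd0]
    nlinarith
  -- log (1 + c) ≥ c / 2
  have hlog : c / 2 ≤ Real.log (1 + c) := by
    have h1c : (0:ℝ) < 1 + c := by linarith
    have := Real.log_le_sub_one_of_pos (x := 1 / (1 + c)) (by positivity)
    rw [Real.log_div one_ne_zero (by linarith), Real.log_one] at this
    have hlb : c / (1 + c) ≤ Real.log (1 + c) := by
      have : -(Real.log (1 + c)) ≤ 1 / (1 + c) - 1 := by linarith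
      have h2 : 1 / (1 + c) - 1 = -(c / (1 + c)) := by field_simp; ring
      linarith [this.trans (le_of_eq h2)]
    have : c / 2 ≤ c / (1 + c) := by
      apply div_le_div_of_nonneg_left (le_of_lt hc0) h1c (by linarith)
    linarith
  set r : ℕ := d / 2 with hrdef
  have hd2r : (d : ℝ) ≤ 2 * r + 1 := by
    have : d ≤ 2 * r + 1 := by omega
    exact_mod_cast this
  have hr0 : (0:ℝ) < r := by
    have : 2 ≤ r := by omega
    have : (2:ℝ) ≤ r := by exact_mod_cast this
    linarith
  -- key: log n < r * log (1 + c)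
  have hlog2 : Real.log 2 < 0.6931471808 := Real.log_two_lt_d9
  have hlogn : Real.log n = L * Real.log 2 := by
    rw [hLdef, Real.logb, div_mul_cancel₀]
    exact ne_of_gt (Real.log_pos one_lt_two)
  have hrc : L * Real.log 2 < (r : ℝ) * (c / 2) := by
    have h1 : (r : ℝ) * (c / 2) = (r : ℝ) * 2 * L / d := by
      rw [hcdef]; field_simp; ring
    rw [h1]
    rw [lt_div_iff₀ hd0]
    have h5 : (5:ℝ) ≤ d := by exact_mod_cast hd5
    have ha : (d:ℝ) - 1 ≤ 2 * r := by linarith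
    have hb : ((d:ℝ) - 1) * L ≤ (r:ℝ) * 2 * L := by nlinarith
    have hcq : Real.log 2 * d < (d:ℝ) - 1 := by nlinarith
    have hdq : L * (Real.log 2 * d) < L * ((d:ℝ) - 1) := mul_lt_mul_of_pos_left hcq hL0
    nlinarith
  have hmain : Real.log n < (r : ℝ) * Real.log (1 + c) := by
    rw [hlogn]
    calc L * Real.log 2 < (r:ℝ) * (c/2) := hrc
      _ ≤ (r:ℝ) * Real.log (1 + c) := by
          apply mul_le_mul_of_nonneg_left hlog (le_of_lt hr0)
  have hn0 : (0:ℝ) < n := by positivity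
  have hpow0 : (0:ℝ) < (1 + c) ^ r := by positivity
  rw [← Real.log_lt_log_iff hn0 hpow0, Real.log_pow]
  exact hmain

lemma logb_term_nonneg {s t : Set V} (hst : s ⊆ t) (hs : s.Nonempty) (ht : t.Finite) :
    Real.logb 2 (s.ncard) ≤ Real.logb 2 (t.ncard) := by
  have h1 : 0 < s.ncard := (Set.ncard_pos (ht.subset hst)).2 hs
  have h2 : s.ncard ≤ t.ncard := Set.ncard_le_ncard hst ht
  exact Real.logb_le_logb_of_le one_lt_two (by exact_mod_cast h1) (by exact_mod_cast h2)

lemma key [Fintype V] (d : ℕ) (hn : 2 ≤ Fintype.card V)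
    (hd : 4 * (Real.logb 2 (Fintype.card V))^2 < (d : ℝ)) :
    ∀ (μ : ℕ) (E : V → V → Prop), (∑ v : V, (scc E v).ncard) ≤ μ →
    ∃ S : Set V,
      (∀ v : V, ∀ u₁ ∈ scc (edgesAvoiding E S) v, ∀ u₂ ∈ scc (edgesAvoiding E S) v,
        ddist (induced (edgesAvoiding E S) (scc (edgesAvoiding E S) v)) u₁ u₂ ≤ (d : ℕ∞)) ∧
      (S.ncard : ℝ) ≤ (4 * Real.logb 2 (Fintype.card V) / d) *
        ∑ v : V, (Real.logb 2 ((scc E v).ncard) -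
          Real.logb 2 ((scc (edgesAvoiding E S) v).ncard)) := by
  classical
  have hV : Nonempty V := Fintype.card_pos_iff.1 (by omega)
  -- basic numeric facts
  have hL1 : 1 ≤ Real.logb 2 (Fintype.card V) := one_le_logb_two hn
  have hd5 : 5 ≤ d := by
    have h4 : (4 : ℝ) ≤ 4 * Real.logb 2 (Fintype.card V) ^ 2 := by nlinarith
    have : (4 : ℝ) < d := lt_of_le_of_lt h4 hd
    exact_mod_cast Nat.lt_iff_add_one_le.mp (by exact_mod_cast this)
  have hd0 : (0:ℝ) < d := by positivity
  set c : ℝ := 4 * Real.logb 2 (Fintype.card V) / d with hcdef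
  have hc0 : 0 ≤ c := by positivity
  have han : ((Fintype.card V : ℝ)) < (1 + c) ^ (d / 2 : ℕ) := analytic_step hn hd
  have hr1 : 1 ≤ d / 2 := by omega
  have hrd : 2 * (d / 2) ≤ d := by omega
  intro μ
  induction μ with
  | zero =>
    intro E hsum
    exfalso
    obtain ⟨v⟩ := hV
    have h1 : 1 ≤ (scc E v).ncard :=
      (Set.ncard_pos (Set.toFinite _)).2 ⟨v, mem_scc_self E v⟩
    have h2 : (scc E v).ncard ≤ ∑ w : V, (scc E w).ncard :=
      Finset.single_le_sum (f := fun w => (scc E w).ncard) (fun w _ => Nat.zero_le _)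
        (Finset.mem_univ v)
    omega
  | succ μ ih =>
    intro E hsum
    by_cases hdc : ∀ v : V, ∀ u₁ ∈ scc E v, ∀ u₂ ∈ scc E v,
        ddist (induced E (scc E v)) u₁ u₂ ≤ (d : ℕ∞)
    · refine ⟨∅, ?_, ?_⟩
      · rw [edgesAvoiding_empty]; exact hdc
      · rw [edgesAvoiding_empty]
        simp [Set.ncard_empty]
    · push_neg at hdc
      obtain ⟨v₀, u₁, h1, u₂, h2, hdd0⟩ := hdc
      set C := scc E v₀ with hCdef
      set E₀ := induced E C with hE₀def
      have hdd : ∀ k ≤ d, ¬ walkN E₀ k u₁ u₂ := walkN_le_of_ddist (not_le.mpr hdd0)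
      -- the cut
      have hcut : ∃ L W : Set V, L.Nonempty ∧ L ⊆ C ∧ W ⊆ C ∧
          ((L.ncard : ℝ) ≤ c * W.ncard) ∧ 2 * W.ncard ≤ C.ncard ∧
          ∀ w ∈ W, scc (edgesAvoiding E L) w ⊆ W := by
        set F : V → V → Prop := fun a b => E b a with hFdef
        have hCf : scc F v₀ = C := scc_flip E v₀
        have hIf : induced F C = fun a b => E₀ b a := induced_flip E C
        set Bout := ball E₀ u₁ (d / 2) with hBoutdef
        set Bin := ball (fun a b => E₀ b a) u₂ (d / 2) with hBindef
        have hBoutC : Bout ⊆ C := ball_induced_subset h1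
        have hBinC : Bin ⊆ C := by
          have : ball (induced F (scc F v₀)) u₂ (d/2) ⊆ scc F v₀ :=
            ball_induced_subset (by rw [hCf]; exact h2)
          rwa [hCf, hIf] at this
        have hdisj : Disjoint Bout Bin := by
          rw [Set.disjoint_left]
          rintro x ⟨j, hj, hw1⟩ ⟨j', hj', hw2⟩
          have hw2' : walkN E₀ j' x u₂ := walkN_flip.1 hw2
          exact hdd (j + j') (by omega) (walkN_trans hw1 hw2')
        have hsum2 : Bout.ncard + Bin.ncard ≤ C.ncard := by
          rw [← Set.ncard_union_eq hdisj (Set.toFinite _) (Set.toFinite _)]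
          exact Set.ncard_le_ncard (Set.union_subset hBoutC hBinC) (Set.toFinite _)
        rcases le_total Bout.ncard Bin.ncard with hle | hle
        · -- use the out-ball
          have hsmall : 2 * (ball (induced E (scc E v₀)) u₁ (d/2)).ncard ≤ (scc E v₀).ncard := by
            show 2 * Bout.ncard ≤ C.ncard
            omega
          exact cut_lemma hc0 hr1 hrd han h1 h2 hdd hsmall
        · -- use the in-ball (flip)
          have hu : u₂ ∈ scc F v₀ := by rw [hCf]; exact h2
          have hu' : u₁ ∈ scc F v₀ := by rw [hCf]; exact h1
          have hdd' : ∀ k ≤ d, ¬ walkN (induced F (scc F v₀)) k u₂ u₁ := by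
            intro k hk hw
            rw [hCf, hIf] at hw
            exact hdd k hk (walkN_flip.1 hw)
          have hsmall : 2 * (ball (induced F (scc F v₀)) u₂ (d/2)).ncard ≤ (scc F v₀).ncard := by
            rw [hCf, hIf]
            show 2 * Bin.ncard ≤ C.ncard
            omega
          obtain ⟨L, W, hLne, hLC, hWC, hLW, hW2, htrap⟩ :=
            cut_lemma hc0 hr1 hrd han hu hu' hdd' hsmall
          rw [hCf] at hLC hWC hW2
          refine ⟨L, W, hLne, hLC, hWC, hLW, hW2, fun w hw => ?_⟩
          have := htrap w hw
          rwa [edgesAvoiding_flip, scc_flip] at this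
      obtain ⟨L, W, hLne, hLC, hWC, hLW, hW2, htrap⟩ := hcut
      set E' := edgesAvoiding E L with hE'def
      -- measure decreases
      have hmono : ∀ v : V, (scc E' v).ncard ≤ (scc E v).ncard := fun v =>
        Set.ncard_le_ncard (scc_mono edgesAvoiding_le v) (Set.toFinite _)
      have hdec : ∑ v : V, (scc E' v).ncard < ∑ v : V, (scc E v).ncard := by
        obtain ⟨w₀, hw₀⟩ := hLne
        apply Finset.sum_lt_sum (fun v _ => hmono v) ⟨w₀, Finset.mem_univ _, ?_⟩
        rw [scc_of_removed hw₀, scc_eq_of_mem (hLC hw₀), ← hCdef, Set.ncard_singleton]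
        have hu12 : u₁ ≠ u₂ := by
          intro h
          exact hdd 0 (Nat.zero_le _) (by rw [h]; rfl)
        have hpair : ({u₁, u₂} : Set V) ⊆ C := by
          rintro x (rfl | rfl)
          exacts [h1, h2]
        have := Set.ncard_le_ncard hpair (Set.toFinite _)
        rw [Set.ncard_pair hu12] at this
        omega
      obtain ⟨S', hdiam', hcard'⟩ := ih E' (by omega)
      refine ⟨L ∪ S', ?_, ?_⟩
      · rw [edgesAvoiding_union]; exact hdiam'
      · rw [edgesAvoiding_union]
        -- cardinality chain
        have hLS : ((L ∪ S').ncard : ℝ) ≤ (L.ncard : ℝ) + (S'.ncard : ℝ) := by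
          exact_mod_cast Set.ncard_union_le L S'
        have hb1 : ∀ v : V, (1:ℕ) ≤ (scc E' v).ncard := fun v =>
          (Set.ncard_pos (Set.toFinite _)).2 ⟨v, mem_scc_self _ _⟩
        have hb1' : ∀ v : V, (1:ℕ) ≤ (scc (edgesAvoiding E' S') v).ncard := fun v =>
          (Set.ncard_pos (Set.toFinite _)).2 ⟨v, mem_scc_self _ _⟩
        -- drop sum
        have hterm0 : ∀ v : V, 0 ≤ Real.logb 2 ((scc E v).ncard) -
            Real.logb 2 ((scc E' v).ncard) := by
          intro v
          have := logb_term_nonneg (s := scc E' v) (t := scc E v)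
            (scc_mono (fun a b h => h.1) v) ⟨v, mem_scc_self _ _⟩ (Set.toFinite _)
          linarith
        have hterm1 : ∀ v ∈ W.toFinset, (1:ℝ) ≤ Real.logb 2 ((scc E v).ncard) -
            Real.logb 2 ((scc E' v).ncard) := by
          intro v hv
          rw [Set.mem_toFinset] at hv
          have hvC : v ∈ C := hWC hv
          have hfe : scc E v = C := scc_eq_of_mem hvC
          have ha1 : 1 ≤ (scc E' v).ncard := hb1 v
          have hab : (scc E' v).ncard ≤ W.ncard :=
            Set.ncard_le_ncard (htrap v hv) (Set.toFinite _)
          have h2am : 2 * (scc E' v).ncard ≤ C.ncard := by omega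
          have hkey : Real.logb 2 (2 * ((scc E' v).ncard :ℝ)) ≤ Real.logb 2 (C.ncard) := by
            apply Real.logb_le_logb_of_le one_lt_two (by positivity)
            exact_mod_cast h2am
          rw [Real.logb_mul (by norm_num) (by positivity),
            Real.logb_self_eq_one one_lt_two] at hkey
          rw [hfe]
          linarith
        have hdrop : (W.ncard : ℝ) ≤ ∑ v : V, (Real.logb 2 ((scc E v).ncard) -
            Real.logb 2 ((scc E' v).ncard)) := by
          have hsub : W.toFinset ⊆ Finset.univ := Finset.subset_univ _
          have hstep1 : ∑ v ∈ W.toFinset, (Real.logb 2 ((scc E v).ncard) -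
              Real.logb 2 ((scc E' v).ncard)) ≤ ∑ v : V, (Real.logb 2 ((scc E v).ncard) -
              Real.logb 2 ((scc E' v).ncard)) :=
            Finset.sum_le_sum_of_subset_of_nonneg hsub (fun v _ _ => hterm0 v)
          have hstep2 : (W.toFinset.card : ℝ) • (1:ℝ) ≤ ∑ v ∈ W.toFinset,
              (Real.logb 2 ((scc E v).ncard) - Real.logb 2 ((scc E' v).ncard)) := by
            have := Finset.card_nsmul_le_sum W.toFinset _ (1:ℝ) hterm1
            simpa using this
          rw [Set.ncard_eq_toFinset_card' W]
          simp only [smul_eq_mul, mul_one] at hstep2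
          linarith
        -- combine
        have hcb : (L.ncard : ℝ) ≤ c * ∑ v : V, (Real.logb 2 ((scc E v).ncard) -
            Real.logb 2 ((scc E' v).ncard)) :=
          hLW.trans (mul_le_mul_of_nonneg_left hdrop hc0)
        have hsplit : ∑ v : V, (Real.logb 2 ((scc E v).ncard) -
              Real.logb 2 ((scc (edgesAvoiding E' S') v).ncard))
            = (∑ v : V, (Real.logb 2 ((scc E v).ncard) - Real.logb 2 ((scc E' v).ncard)))
            + ∑ v : V, (Real.logb 2 ((scc E' v).ncard) -
              Real.logb 2 ((scc (edgesAvoiding E' S') v).ncard)) := by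
          rw [← Finset.sum_add_distrib]
          apply Finset.sum_congr rfl
          intro v _
          ring
        rw [hsplit, mul_add]
        calc ((L ∪ S').ncard : ℝ) ≤ (L.ncard : ℝ) + (S'.ncard : ℝ) := hLS
          _ ≤ _ := add_le_add hcb hcard'


lemma sum_over_sccs [Fintype V] (R : V → V → Prop) (g : ℕ → ℝ) :
    ∑ C ∈ sccs R, (C.ncard : ℝ) * g C.ncard = ∑ v : V, g ((scc R v).ncard) := by
  letI := Classical.decEq (Set V)
  unfold sccs
  refine Finset.sum_image' (f := fun C : Set V => (C.ncard : ℝ) * g C.ncard)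
    (fun v => g ((scc R v).ncard)) ?_
  intro i _
  have hfilter : (Finset.univ.filter (fun j => scc R j = scc R i))
      = (Set.toFinite (scc R i)).toFinset := by
    ext x
    simp only [Finset.mem_filter, Finset.mem_univ, true_and, Set.Finite.mem_toFinset]
    constructor
    · intro h; rw [← h]; exact mem_scc_self R x
    · intro h; exact scc_eq_of_mem h
  rw [hfilter]
  have hcongr : ∑ x ∈ (Set.toFinite (scc R i)).toFinset, g ((scc R x).ncard)
      = ∑ _x ∈ (Set.toFinite (scc R i)).toFinset, g ((scc R i).ncard) := by
    apply Finset.sum_congr rfl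
    intro x hx
    rw [Set.Finite.mem_toFinset] at hx
    rw [scc_eq_of_mem hx]
  rw [hcongr, Finset.sum_const, ← Set.ncard_eq_toFinset_card (scc R i) (Set.toFinite _)]
  simp [mul_comm]

lemma edgesAvoiding_univ (E : V → V → Prop) :
    edgesAvoiding E (Set.univ : Set V) = fun _ _ => False := by
  funext a b
  simp [edgesAvoiding]

lemma scc_false (v : V) : scc (fun _ _ : V => False) v = {v} := by
  ext u
  simp only [scc, Set.mem_setOf_eq, Set.mem_singleton_iff]
  rw [Relation.reflTransGen_iff_eq (fun b h => h), Relation.reflTransGen_iff_eq (fun b h => h)]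
  constructor
  · rintro ⟨rfl, -⟩; rfl
  · rintro rfl; exact ⟨rfl, rfl⟩

lemma ddist_self_le_d (R : V → V → Prop) (u : V) (d : ℕ) : ddist R u u ≤ (d : ℕ∞) := by
  have h0 : ddist R u u ≤ ((0 : ℕ) : ℕ∞) := ddist_le_of_walkN (k := 0) rfl
  exact h0.trans (by exact_mod_cast Nat.zero_le d)

/-- the Partition lemma (existence content). -/
theorem stmt6 {V : Type*} [Fintype V] (E : V → V → Prop) (d : ℕ) (hd : 1 ≤ d) :
    ∃ S : Set V,
      (∀ v : V, ∀ u₁ ∈ scc (edgesAvoiding E S) v, ∀ u₂ ∈ scc (edgesAvoiding E S) v,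
        ddist (induced (edgesAvoiding E S) (scc (edgesAvoiding E S) v)) u₁ u₂ ≤ (d : ℕ∞)) ∧
      (S.ncard : ℝ) ≤ (4 * Real.logb 2 (Fintype.card V) / d) *
        ∑ C ∈ sccs (edgesAvoiding E S),
          (C.ncard : ℝ) * (Real.logb 2 (Fintype.card V) - Real.logb 2 C.ncard) := by
  classical
  rcases le_or_gt (Fintype.card V) 1 with hn1 | hn2
  · -- trivial case: at most one vertex
    refine ⟨∅, ?_, ?_⟩
    · intro v w₁ _ w₂ _
      have hww : w₁ = w₂ := Fintype.card_le_one_iff.mp hn1 w₁ w₂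
      subst hww
      exact ddist_self_le_d _ _ _
    · have hlog : Real.logb 2 (Fintype.card V) = 0 := by
        interval_cases h : (Fintype.card V)
        · simp
        · simp
      rw [hlog]
      simp [Set.ncard_empty]
  · have hn2' : 2 ≤ Fintype.card V := hn2
    have hL1 : 1 ≤ Real.logb 2 (Fintype.card V) := one_le_logb_two hn2'
    have hd0 : (0:ℝ) < d := by exact_mod_cast hd
    rcases lt_or_ge (4 * (Real.logb 2 (Fintype.card V))^2) (d : ℝ) with hlt | hle
    · -- main case: apply key lemma
      obtain ⟨S, hdiam, hcard⟩ := key d hn2' hlt (∑ v : V, (scc E v).ncard) E le_rfl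
      refine ⟨S, hdiam, ?_⟩
      rw [sum_over_sccs (edgesAvoiding E S)
        (fun k => Real.logb 2 (Fintype.card V) - Real.logb 2 k)]
      have hterm : ∀ v : V, Real.logb 2 ((scc E v).ncard) -
          Real.logb 2 ((scc (edgesAvoiding E S) v).ncard) ≤
          Real.logb 2 (Fintype.card V) -
          Real.logb 2 ((scc (edgesAvoiding E S) v).ncard) := by
        intro v
        have h1 : 0 < (scc E v).ncard := (Set.ncard_pos (Set.toFinite _)).2 ⟨v, mem_scc_self _ _⟩
        have h2 : (scc E v).ncard ≤ Fintype.card V := by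
          have := Set.ncard_le_ncard (Set.subset_univ (scc E v)) (Set.toFinite _)
          simpa [Set.ncard_univ, Nat.card_eq_fintype_card] using this
        have := Real.logb_le_logb_of_le one_lt_two
          (by exact_mod_cast h1 : (0:ℝ) < ((scc E v).ncard : ℝ))
          (show ((scc E v).ncard : ℝ) ≤ ((Fintype.card V : ℕ) : ℝ) by exact_mod_cast h2)
        linarith
      have hc0 : (0:ℝ) ≤ 4 * Real.logb 2 (Fintype.card V) / d := by positivity
      calc (S.ncard : ℝ) ≤ _ := hcard
        _ ≤ _ := mul_le_mul_of_nonneg_left (Finset.sum_le_sum (fun v _ => hterm v)) hc0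
    · -- small d: remove everything
      refine ⟨Set.univ, ?_, ?_⟩
      · intro v w₁ hw₁ w₂ hw₂
        rw [edgesAvoiding_univ, scc_false] at hw₁ hw₂
        rw [Set.mem_singleton_iff] at hw₁ hw₂
        subst hw₁; subst hw₂
        exact ddist_self_le_d _ _ _
      · rw [edgesAvoiding_univ,
          sum_over_sccs (fun _ _ => False)
            (fun k => Real.logb 2 (Fintype.card V) - Real.logb 2 k)]
        have hsum : ∑ v : V, (Real.logb 2 (Fintype.card V) -
            Real.logb 2 ((scc (fun _ _ : V => False) v).ncard))
            = (Fintype.card V : ℝ) * Real.logb 2 (Fintype.card V) := by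
          have h1 : ∀ v : V, Real.logb 2 (((scc (fun _ _ : V => False) v).ncard : ℝ)) = 0 := by
            intro v
            rw [scc_false, Set.ncard_singleton]
            simp
          simp only [h1, sub_zero]
          rw [Finset.sum_const, Finset.card_univ]
          simp [mul_comm]
        rw [hsum]
        have huniv : ((Set.univ : Set V).ncard : ℝ) = (Fintype.card V : ℝ) := by
          simp [Set.ncard_univ, Nat.card_eq_fintype_card]
        rw [huniv, div_mul_eq_mul_div, le_div_iff₀ hd0]
        have hn0 : (0:ℝ) < (Fintype.card V : ℝ) := by positivity
        nlinarith
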